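/- For every real a with −1 < a < 1, the integral ∫_{−∞}^{∞} e^{a·t}/cosh(t) dt converges and equals π / cos(π·a/2). -/

import Mathlib

open MeasureTheory Real Set

/-- For `−1 < a < 1`, the integral `∫ e^{a·t}/cosh t dt` over `ℝ` converges and equals
`π / cos(π·a/2)`. -/
theorem stmt_11 (a : ℝ) (ha : -1 < a) (ha' : a < 1) :
    MeasureTheory.Integrable (fun t : ℝ => Real.exp (a * t) / Real.cosh t) ∧
    (∫ t : ℝ, Real.exp (a * t) / Real.cosh t) = Real.pi / Real.cos (Real.pi * a / 2) := by
  set s : ℝ := (1 - a) / 2 with hs_def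
  have hs0 : 0 < s := by rw [hs_def]; linarith
  have hs1 : s < 1 := by rw [hs_def]; linarith
  -- the substitution map
  set g : ℝ → ℝ := fun t => (1 + Real.exp (2 * t))⁻¹ with hg_def
  set g' : ℝ → ℝ := fun t => -(2 * Real.exp (2 * t)) / (1 + Real.exp (2 * t)) ^ 2 with hg'_def
  -- the Beta integrand
  set F : ℝ → ℝ := fun x => x ^ (s - 1) * (1 - x) ^ (-s) with hF_def
  have hDpos : ∀ t : ℝ, (0 : ℝ) < 1 + Real.exp (2 * t) := fun t => by positivity
  have hg'_deriv : ∀ t : ℝ, HasDerivAt g (g' t) t := by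
    intro t
    have h1 : HasDerivAt (fun t : ℝ => 1 + Real.exp (2 * t)) (2 * Real.exp (2 * t)) t := by
      have := (Real.hasDerivAt_exp (2 * t)).comp t ((hasDerivAt_id t).const_mul 2)
      simpa [mul_comm] using this.const_add 1
    exact h1.inv (hDpos t).ne'
  have hinj : Set.InjOn g Set.univ := by
    have : StrictAnti g := by
      intro t t' h
      have : Real.exp (2 * t) < Real.exp (2 * t') := by
        apply Real.exp_lt_exp.mpr; linarith
      exact (inv_lt_inv₀ (hDpos t') (hDpos t)).mpr (by linarith)
    exact this.injective.injOn
  have himg : g '' Set.univ = Set.Ioo 0 1 := by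
    apply Set.eq_of_subset_of_subset
    · rintro x ⟨t, -, rfl⟩
      refine ⟨by positivity, ?_⟩
      rw [inv_lt_one_iff₀]
      right; linarith [Real.exp_pos (2 * t)]
    · rintro x ⟨hx0, hx1⟩
      refine ⟨(1 / 2) * Real.log (x⁻¹ - 1), trivial, ?_⟩
      have hxinv : 1 < x⁻¹ := (one_lt_inv₀ hx0).mpr hx1
      show (1 + Real.exp (2 * ((1 / 2) * Real.log (x⁻¹ - 1))))⁻¹ = x
      rw [show 2 * ((1 / 2) * Real.log (x⁻¹ - 1)) = Real.log (x⁻¹ - 1) by ring,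
        Real.exp_log (by linarith)]
      field_simp; ring
  -- key pointwise identity
  have key : ∀ t : ℝ, |g' t| • F (g t) = Real.exp (a * t) / Real.cosh t := by
    intro t
    have hE : (0 : ℝ) < Real.exp (2 * t) := Real.exp_pos _
    have hD := hDpos t
    have habs : |g' t| = 2 * Real.exp (2 * t) / (1 + Real.exp (2 * t)) ^ 2 := by
      rw [hg'_def, abs_div, abs_neg, abs_of_pos (by positivity), abs_of_pos (by positivity)]
    have h1 : (1 + Real.exp (2 * t))⁻¹ ^ (s - 1)
        = (1 + Real.exp (2 * t)) ^ (1 - s : ℝ) := by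
      rw [Real.inv_rpow hD.le, ← Real.rpow_neg hD.le, neg_sub]
    have h2 : (1 - (1 + Real.exp (2 * t))⁻¹) = Real.exp (2 * t) / (1 + Real.exp (2 * t)) := by
      field_simp; ring
    have h3 : (Real.exp (2 * t) / (1 + Real.exp (2 * t))) ^ (-s)
        = Real.exp (2 * t * (-s)) * (1 + Real.exp (2 * t)) ^ (s : ℝ) := by
      rw [Real.div_rpow hE.le hD.le, Real.rpow_neg hD.le, div_inv_eq_mul]
      conv_rhs => rw [Real.exp_mul]
    rw [smul_eq_mul, habs, hF_def]
    show 2 * Real.exp (2 * t) / (1 + Real.exp (2 * t)) ^ 2 *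
        (((1 + Real.exp (2 * t))⁻¹) ^ (s - 1) * (1 - (1 + Real.exp (2 * t))⁻¹) ^ (-s))
        = Real.exp (a * t) / Real.cosh t
    rw [h1, h2, h3]
    have h4 : (1 + Real.exp (2 * t)) ^ (1 - s : ℝ) * (1 + Real.exp (2 * t)) ^ (s : ℝ)
        = 1 + Real.exp (2 * t) := by
      rw [← Real.rpow_add hD, sub_add_cancel, Real.rpow_one]
    have h5 : Real.exp (2 * t) * Real.exp (2 * t * (-s)) = Real.exp (t * (1 + a)) := by
      rw [← Real.exp_add]
      exact congrArg Real.exp (by rw [hs_def]; ring)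
    have e1 : Real.exp (t * (1 + a)) * Real.exp t
        = Real.exp (a * t) * Real.exp (2 * t) := by
      rw [← Real.exp_add, ← Real.exp_add]
      exact congrArg Real.exp (by ring)
    have e2 : Real.exp (t * (1 + a)) * Real.exp (-t) = Real.exp (a * t) := by
      rw [← Real.exp_add]
      exact congrArg Real.exp (by ring)
    calc 2 * Real.exp (2 * t) / (1 + Real.exp (2 * t)) ^ 2 *
          ((1 + Real.exp (2 * t)) ^ (1 - s : ℝ) *
            (Real.exp (2 * t * (-s)) * (1 + Real.exp (2 * t)) ^ (s : ℝ)))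
        = 2 * (Real.exp (2 * t) * Real.exp (2 * t * (-s))) *
            ((1 + Real.exp (2 * t)) ^ (1 - s : ℝ) * (1 + Real.exp (2 * t)) ^ (s : ℝ))
            / (1 + Real.exp (2 * t)) ^ 2 := by ring
      _ = 2 * Real.exp (t * (1 + a)) * (1 + Real.exp (2 * t))
            / (1 + Real.exp (2 * t)) ^ 2 := by rw [h4, h5]
      _ = 2 * Real.exp (t * (1 + a)) / (1 + Real.exp (2 * t)) := by
          rw [sq]; field_simp
      _ = Real.exp (a * t) / Real.cosh t := by
          rw [Real.cosh_eq, div_eq_div_iff hD.ne' (by positivity)]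
          linear_combination e1 + e2
  -- integrability of the Beta integrand on (0,1), via the complex Beta integral
  have hu : 0 < Complex.re (s : ℂ) := by simpa using hs0
  have hv : 0 < Complex.re ((1 - s : ℝ) : ℂ) := by
    simpa using (by linarith : (0:ℝ) < 1 - s)
  have hbetaC : IntervalIntegrable
      (fun x : ℝ => (x : ℂ) ^ ((s : ℂ) - 1) * (1 - (x : ℂ)) ^ (((1 - s : ℝ) : ℂ) - 1))
      volume 0 1 := Complex.betaIntegral_convergent hu hv
  have hIooC : IntegrableOn
      (fun x : ℝ => (x : ℂ) ^ ((s : ℂ) - 1) * (1 - (x : ℂ)) ^ (((1 - s : ℝ) : ℂ) - 1))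
      (Set.Ioo 0 1) := by
    exact ((intervalIntegrable_iff_integrableOn_Ioc_of_le zero_le_one).mp hbetaC).mono_set
      Set.Ioo_subset_Ioc_self
  have hcongr : Set.EqOn
      (fun x : ℝ => (x : ℂ) ^ ((s : ℂ) - 1) * (1 - (x : ℂ)) ^ (((1 - s : ℝ) : ℂ) - 1))
      (fun x : ℝ => ((F x : ℝ) : ℂ)) (Set.Ioo 0 1) := by
    intro x hx
    have hx0 : (0:ℝ) ≤ x := hx.1.le
    have hx1 : (0:ℝ) ≤ 1 - x := by linarith [hx.2]
    have c1 : ((s : ℂ) - 1) = ((s - 1 : ℝ) : ℂ) := by push_cast; ring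
    have c2 : (((1 - s : ℝ) : ℂ) - 1) = ((-s : ℝ) : ℂ) := by push_cast; ring
    have c3 : (1 - (x : ℂ)) = (((1 - x : ℝ)) : ℂ) := by push_cast; ring
    simp only [hF_def, c1, c2, c3]
    rw [← Complex.ofReal_cpow hx0, ← Complex.ofReal_cpow hx1, ← Complex.ofReal_mul]
  have hF_int : IntegrableOn F (Set.Ioo 0 1) := by
    have h := (hIooC.congr_fun hcongr measurableSet_Ioo).re
    exact h
  -- change of variables
  have hgW : ∀ t ∈ (Set.univ : Set ℝ), HasDerivWithinAt g (g' t) Set.univ t :=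
    fun t _ => (hg'_deriv t).hasDerivWithinAt
  have hfun : (fun t : ℝ => |g' t| • F (g t))
      = fun t : ℝ => Real.exp (a * t) / Real.cosh t := funext key
  have hint : Integrable (fun t : ℝ => Real.exp (a * t) / Real.cosh t) := by
    have h := (integrableOn_image_iff_integrableOn_abs_deriv_smul MeasurableSet.univ hgW
      hinj F).mp (himg ▸ hF_int)
    rw [integrableOn_univ, hfun] at h
    exact h
  have hval : (∫ t : ℝ, Real.exp (a * t) / Real.cosh t) = ∫ x in Set.Ioo (0:ℝ) 1, F x := by
    rw [← himg, integral_image_eq_integral_abs_deriv_smul MeasurableSet.univ hgW hinj F,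
      Measure.restrict_univ, hfun]
  -- the Beta integral value
  have hsum : (s : ℂ) + ((1 - s : ℝ) : ℂ) = 1 := by push_cast; ring
  have hbeta_eq : Complex.betaIntegral (s : ℂ) ((1 - s : ℝ) : ℂ)
      = ((π / Real.cos (π * a / 2) : ℝ) : ℂ) := by
    have h := Complex.Gamma_mul_Gamma_eq_betaIntegral hu hv
    rw [hsum, Complex.Gamma_one, one_mul] at h
    have h2 : ((1 - s : ℝ) : ℂ) = 1 - (s : ℂ) := by push_cast; ring
    rw [← h, h2, Complex.Gamma_mul_Gamma_one_sub]
    have h3 : (↑π * (s : ℂ)) = ((π * s : ℝ) : ℂ) := by push_cast; ring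
    rw [h3, ← Complex.ofReal_sin]
    have h4 : Real.sin (π * s) = Real.cos (π * a / 2) := by
      rw [show π * s = π / 2 - π * a / 2 by rw [hs_def]; ring, Real.sin_pi_div_two_sub]
    rw [h4, Complex.ofReal_div]
  have hIoo_val : (∫ x in Set.Ioo (0:ℝ) 1, F x) = π / Real.cos (π * a / 2) := by
    have : Complex.betaIntegral (s : ℂ) ((1 - s : ℝ) : ℂ)
        = ((∫ x in Set.Ioo (0:ℝ) 1, F x : ℝ) : ℂ) := by
      rw [Complex.betaIntegral, intervalIntegral.integral_of_le zero_le_one,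
        MeasureTheory.integral_Ioc_eq_integral_Ioo,
        setIntegral_congr_fun measurableSet_Ioo hcongr]
      exact integral_ofReal
    rw [this] at hbeta_eq
    exact_mod_cast hbeta_eq
  exact ⟨hint, by rw [hval, hIoo_val]⟩
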